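/- arXiv:math/9411209 — 4 statements merged into one kernel-verified Lean document; each statement's English description precedes it below -/
import Mathlib

section
/- Let F ⊆ R[X]. Every chain of one-step s-reductions via F must terminate; that is, there is no infinite sequence g_0, g_1, g_2, … in R[X] such that g_j s-reduces to g_{j+1} via F in one step for every j. Consequently every g ∈ R[X] has a final s-reductum via F (an element obtained from g by a finite chain of one-step s-reductions that cannot be further s-reduced via F). -/
open MvPolynomial

/-- A term order on the monomials (exponent vectors) of a polynomial ring in `n`
variables: a well-founded linear order compatible with multiplication of power
products (i.e. with addition of exponent vectors). -/
structure TermOrder (n : ℕ) where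
  lo : LinearOrder (Fin n →₀ ℕ)
  wf : WellFounded lo.lt
  add_le_add : ∀ a b c : Fin n →₀ ℕ, lo.le a b → lo.le (a + c) (b + c)

namespace TermOrder

variable {n : ℕ} {R : Type*} [CommRing R]

/-- `lp p`: the leading power product (exponent vector) of `p`; junk value `0`
for the zero polynomial. -/
noncomputable def lp (ord : TermOrder n) (p : MvPolynomial (Fin n) R) : Fin n →₀ ℕ :=
  WithBot.unbotD 0 (@Finset.max _ ord.lo p.support)

/-- `lc p`: the leading coefficient of `p` (0 if `p = 0`). -/
noncomputable def lc (ord : TermOrder n) (p : MvPolynomial (Fin n) R) : R :=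
  p.coeff (ord.lp p)

/-- `ltm p`: the leading term `lc(p)·lp(p)` of `p` (0 if `p = 0`). -/
noncomputable def ltm (ord : TermOrder n) (p : MvPolynomial (Fin n) R) : MvPolynomial (Fin n) R :=
  monomial (ord.lp p) (ord.lc p)

end TermOrder

variable {n : ℕ} {R : Type*} [CommRing R]

/-- An `F`-power product: a finite product `∏ fᵢ^{eᵢ}` with `fᵢ ∈ F`. -/
def IsPowerProduct (F : Set (MvPolynomial (Fin n) R)) (q : MvPolynomial (Fin n) R) : Prop :=
  ∃ e : MvPolynomial (Fin n) R →₀ ℕ, (e.support : Set (MvPolynomial (Fin n) R)) ⊆ F ∧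
    q = e.prod (fun f k => f ^ k)

/-- `F` is a SAGBI basis for the `R`-subalgebra `A`: `R[Lt A] = R[Lt F]`. -/
def IsSAGBI (ord : TermOrder n) (A : Subalgebra R (MvPolynomial (Fin n) R))
    (F : Set (MvPolynomial (Fin n) R)) : Prop :=
  Algebra.adjoin R (ord.ltm '' (A : Set (MvPolynomial (Fin n) R))) =
    Algebra.adjoin R (ord.ltm '' F)

/-- One step of s-reduction of `g` to `h` via `F`. -/
def SStep (ord : TermOrder n) (F : Set (MvPolynomial (Fin n) R))
    (g h : MvPolynomial (Fin n) R) : Prop :=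
  ∃ (β : Fin n →₀ ℕ) (N : ℕ) (q : Fin N → MvPolynomial (Fin n) R) (r : Fin N → R),
    g.coeff β ≠ 0 ∧
    (∀ i, IsPowerProduct F (q i) ∧ q i ≠ 0 ∧ ord.lp (q i) = β) ∧
    g.coeff β = ∑ i, r i * ord.lc (q i) ∧
    h = g - ∑ i, C (r i) * q i

/-- `g` s-reduces to `h` via `F`: a finite chain of one-step s-reductions. -/
def SReduce (ord : TermOrder n) (F : Set (MvPolynomial (Fin n) R)) :
    MvPolynomial (Fin n) R → MvPolynomial (Fin n) R → Prop :=
  Relation.ReflTransGen (SStep ord F)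

/-- One step of si-reduction of `h` to `h'` via `G`, relative to the subalgebra `A`. -/
def SiStep (ord : TermOrder n) (A : Subalgebra R (MvPolynomial (Fin n) R))
    (G : Set (MvPolynomial (Fin n) R)) (h h' : MvPolynomial (Fin n) R) : Prop :=
  ∃ (α : Fin n →₀ ℕ) (M : ℕ) (g a : Fin M → MvPolynomial (Fin n) R),
    h.coeff α ≠ 0 ∧
    (∀ i, g i ∈ G) ∧ (∀ i, a i ∈ A) ∧
    (∀ i, a i * g i ≠ 0 ∧ ord.lp (a i * g i) = α) ∧
    (monomial α (h.coeff α) : MvPolynomial (Fin n) R) = ∑ i, ord.ltm (a i * g i) ∧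
    h' = h - ∑ i, a i * g i

/-- `h` si-reduces to `h'` via `G`: a finite chain of one-step si-reductions. -/
def SiReduce (ord : TermOrder n) (A : Subalgebra R (MvPolynomial (Fin n) R))
    (G : Set (MvPolynomial (Fin n) R)) :
    MvPolynomial (Fin n) R → MvPolynomial (Fin n) R → Prop :=
  Relation.ReflTransGen (SiStep ord A G)

/-- The subalgebra `R[Lt A]` generated by the leading terms of elements of `A`. -/
noncomputable def LtAlg (ord : TermOrder n) (A : Subalgebra R (MvPolynomial (Fin n) R)) :
    Subalgebra R (MvPolynomial (Fin n) R) :=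
  Algebra.adjoin R (ord.ltm '' (A : Set (MvPolynomial (Fin n) R)))

/-- The leading term of an element of `A`, as an element of `R[Lt A]`. -/
noncomputable def ltA (ord : TermOrder n) (A : Subalgebra R (MvPolynomial (Fin n) R))
    (a : A) : LtAlg ord A :=
  ⟨ord.ltm (a : MvPolynomial (Fin n) R), Algebra.subset_adjoin ⟨a, a.2, rfl⟩⟩

/-- `G ⊆ I` is a SAGBI–Gröbner basis (SG-basis) for the ideal `I` of `A`:
`Lt G` generates the ideal `⟨Lt I⟩` in the subalgebra `R[Lt A]`. -/
def IsSGBasis (ord : TermOrder n) (A : Subalgebra R (MvPolynomial (Fin n) R))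
    (I : Ideal A) (G : Set A) : Prop :=
  Ideal.span
      ((Subtype.val ⁻¹' (ord.ltm '' (Subtype.val '' G)) : Set (LtAlg ord A))) =
  Ideal.span
      ((Subtype.val ⁻¹' (ord.ltm '' (Subtype.val '' (I : Set A))) : Set (LtAlg ord A)))

section Aux

open scoped Classical

variable (ord : TermOrder n)

/-- The support-indicator finsupp of a polynomial. -/
noncomputable def suppInd (p : MvPolynomial (Fin n) R) : (Fin n →₀ ℕ) →₀ ℕ :=
  ⟨p.support, fun γ => if p.coeff γ = 0 then 0 else 1, by
    intro γ
    simp only [MvPolynomial.mem_support_iff]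
    constructor
    · intro h; simp [h]
    · intro h hc; simp [hc] at h⟩

lemma coeff_eq_zero_of_lp_lt {q : MvPolynomial (Fin n) R} (hq : q ≠ 0) {γ : Fin n →₀ ℕ}
    (h : ord.lo.lt (ord.lp q) γ) : q.coeff γ = 0 := by
  letI := ord.lo
  by_contra hc
  have hmem : γ ∈ q.support := MvPolynomial.mem_support_iff.2 hc
  have hne : q.support.Nonempty := ⟨γ, hmem⟩
  obtain ⟨m, hm⟩ := Finset.max_of_nonempty hne
  have hlpm : ord.lp q = m := by simp [TermOrder.lp, hm]
  have hle := Finset.le_max_of_eq hmem hm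
  rw [hlpm] at h
  exact absurd h (not_lt.2 hle)

/-- The key decrease lemma: one s-reduction step strictly decreases the
support-indicator in the lexicographic order (largest monomials first). -/
lemma sstep_lex (F : Set (MvPolynomial (Fin n) R)) {g h : MvPolynomial (Fin n) R}
    (hs : SStep ord F g h) :
    Finsupp.Lex (fun a b => ord.lo.lt b a) (· < ·) (suppInd h) (suppInd g) := by
  letI := ord.lo
  obtain ⟨β, N, q, r, hgβ, hq, hsum, hh⟩ := hs
  have key : ∀ γ : Fin n →₀ ℕ,
      (∑ i, C (r i) * q i : MvPolynomial (Fin n) R).coeff γ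
        = ∑ i, r i * (q i).coeff γ := by
    intro γ
    rw [MvPolynomial.coeff_sum]
    exact Finset.sum_congr rfl fun i _ => MvPolynomial.coeff_C_mul _ _ _
  have hcoeff : ∀ γ : Fin n →₀ ℕ, h.coeff γ = g.coeff γ - ∑ i, r i * (q i).coeff γ := by
    intro γ
    rw [hh, MvPolynomial.coeff_sub, key]
  have habove : ∀ γ : Fin n →₀ ℕ, ord.lo.lt β γ → h.coeff γ = g.coeff γ := by
    intro γ hγ
    rw [hcoeff]
    have : ∀ i, (q i).coeff γ = 0 := fun i => by
      have hi := hq i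
      exact coeff_eq_zero_of_lp_lt ord hi.2.1 (hi.2.2 ▸ hγ)
    simp [this]
  have hβ0 : h.coeff β = 0 := by
    rw [hcoeff]
    have : ∀ i, (q i).coeff β = ord.lc (q i) := fun i => by
      rw [← (hq i).2.2]; rfl
    simp only [this]
    rw [← hsum, sub_self]
  refine ⟨β, fun d hd => ?_, ?_⟩
  · show suppInd h d = suppInd g d
    simp only [suppInd, Finsupp.coe_mk]
    rw [habove d hd]
  · show (suppInd h) β < (suppInd g) β
    simp only [suppInd, Finsupp.coe_mk]
    rw [hβ0, if_pos rfl, if_neg hgβ]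
    exact Nat.zero_lt_one

lemma sstep_wf (F : Set (MvPolynomial (Fin n) R)) :
    WellFounded (fun a b : MvPolynomial (Fin n) R => SStep ord F b a) := by
  letI := ord.lo
  haveI : IsTrichotomous (Fin n →₀ ℕ) (fun a b : Fin n →₀ ℕ => ord.lo.lt b a) :=
    ⟨fun a b => by rcases lt_trichotomy a b with h | h | h <;> tauto⟩
  have hlex : WellFounded (Finsupp.Lex (fun a b : Fin n →₀ ℕ => ord.lo.lt b a)
      ((· < ·) : ℕ → ℕ → Prop)) := by
    refine Finsupp.Lex.wellFounded' (fun m => Nat.not_lt_zero m) Nat.lt_wfRel.wf ?_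
    exact ord.wf
  exact Subrelation.wf (fun {a b} hab => sstep_lex ord F hab)
    (InvImage.wf suppInd hlex)

end Aux

/-- every chain of one-step s-reductions via `F` terminates, and
consequently every `g` has a final s-reductum via `F`. -/
theorem sreduce_terminates {n : ℕ} {R : Type*} [CommRing R] [IsDomain R]
    [IsNoetherianRing R] (ord : TermOrder n) (F : Set (MvPolynomial (Fin n) R)) :
    (¬ ∃ seq : ℕ → MvPolynomial (Fin n) R, ∀ j, SStep ord F (seq j) (seq (j + 1))) ∧
    (∀ g : MvPolynomial (Fin n) R, ∃ h : MvPolynomial (Fin n) R,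
      SReduce ord F g h ∧ ∀ h' : MvPolynomial (Fin n) R, ¬ SStep ord F h h') := by
  have wf := sstep_wf ord F
  constructor
  · rintro ⟨seq, hseq⟩
    have key : ∀ x, Acc (fun a b => SStep ord F b a) x → ∀ k, x = seq k → False := by
      intro x hx
      induction hx with
      | intro x _ ih =>
        intro k hk
        exact ih (seq (k + 1)) (hk ▸ hseq k) (k + 1) rfl
    exact key (seq 0) (wf.apply _) 0 rfl
  · intro g
    induction g using WellFounded.induction wf with
    | _ g ih =>
      by_cases hg : ∃ h', SStep ord F g h'
      · obtain ⟨h', hh'⟩ := hg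
        obtain ⟨h, hred, hfin⟩ := ih h' hh'
        exact ⟨h, Relation.ReflTransGen.head hh' hred, hfin⟩
      · exact ⟨g, Relation.ReflTransGen.refl, fun h' hh' => hg ⟨h', hh'⟩⟩
end

section
/- Let F ⊆ A. Then F is a SAGBI basis for A if and only if for every nonzero a ∈ A, every final s-reductum of a via F is 0. -/
open MvPolynomial

variable {n : ℕ} {R : Type*} [CommRing R]

namespace SagbiAux

open MvPolynomial

variable {n : ℕ} {R : Type*} [CommRing R]

section Order
variable (ord : TermOrder n)

theorem lo_le_refl (a : Fin n →₀ ℕ) : ord.lo.le a a := ord.lo.le_refl a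

theorem lo_le_trans {a b c : Fin n →₀ ℕ} (h1 : ord.lo.le a b) (h2 : ord.lo.le b c) :
    ord.lo.le a c := ord.lo.le_trans a b c h1 h2

theorem lo_lt_iff {a b : Fin n →₀ ℕ} :
    ord.lo.lt a b ↔ ord.lo.le a b ∧ ¬ ord.lo.le b a := ord.lo.lt_iff_le_not_ge a b

theorem lo_lt_of_not_le {a b : Fin n →₀ ℕ} (h : ¬ ord.lo.le a b) : ord.lo.lt b a :=
  (lo_lt_iff ord).mpr ⟨(ord.lo.le_total a b).resolve_left h, h⟩

theorem lo_le_of_lt {a b : Fin n →₀ ℕ} (h : ord.lo.lt a b) : ord.lo.le a b :=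
  ((lo_lt_iff ord).mp h).1

theorem lo_not_le_of_lt {a b : Fin n →₀ ℕ} (h : ord.lo.lt a b) : ¬ ord.lo.le b a :=
  ((lo_lt_iff ord).mp h).2

theorem lo_not_lt_of_le {a b : Fin n →₀ ℕ} (h : ord.lo.le a b) : ¬ ord.lo.lt b a :=
  fun hlt => lo_not_le_of_lt ord hlt h

theorem lo_ne_of_lt {a b : Fin n →₀ ℕ} (h : ord.lo.lt a b) : a ≠ b := by
  rintro rfl; exact lo_not_le_of_lt ord h (lo_le_refl ord a)

theorem lo_lt_of_le_ne {a b : Fin n →₀ ℕ} (h : ord.lo.le a b) (hne : a ≠ b) :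
    ord.lo.lt a b := by
  refine (lo_lt_iff ord).mpr ⟨h, fun h2 => hne (ord.lo.le_antisymm a b h h2)⟩

theorem lo_lt_of_lt_of_le {a b c : Fin n →₀ ℕ} (h1 : ord.lo.lt a b) (h2 : ord.lo.le b c) :
    ord.lo.lt a c := by
  refine (lo_lt_iff ord).mpr ⟨lo_le_trans ord (lo_le_of_lt ord h1) h2, fun h3 =>
    lo_not_le_of_lt ord h1 (lo_le_trans ord h2 h3)⟩

theorem lo_lt_of_le_of_lt {a b c : Fin n →₀ ℕ} (h1 : ord.lo.le a b) (h2 : ord.lo.lt b c) :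
    ord.lo.lt a c := by
  refine (lo_lt_iff ord).mpr ⟨lo_le_trans ord h1 (lo_le_of_lt ord h2), fun h3 =>
    lo_not_le_of_lt ord h2 (lo_le_trans ord h3 h1)⟩

theorem lo_add_le_add {a b c d : Fin n →₀ ℕ} (h1 : ord.lo.le a b) (h2 : ord.lo.le c d) :
    ord.lo.le (a + c) (b + d) := by
  refine lo_le_trans ord (ord.add_le_add a b c h1) ?_
  have := ord.add_le_add c d b h2
  rwa [add_comm c b, add_comm d b] at this

theorem lo_add_lt_add_right {a b : Fin n →₀ ℕ} (h : ord.lo.lt a b) (c : Fin n →₀ ℕ) :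
    ord.lo.lt (a + c) (b + c) := by
  refine lo_lt_of_le_ne ord (ord.add_le_add a b c (lo_le_of_lt ord h)) fun he => ?_
  exact lo_ne_of_lt ord h (add_right_cancel he)

theorem lo_add_lt_add {a b c d : Fin n →₀ ℕ} (h1 : ord.lo.lt a b) (h2 : ord.lo.le c d) :
    ord.lo.lt (a + c) (b + d) :=
  lo_lt_of_lt_of_le ord (lo_add_lt_add_right ord h1 c) (by
    have := ord.add_le_add c d b h2
    rwa [add_comm c b, add_comm d b] at this)

end Order

section LP
variable (ord : TermOrder n)

theorem le_lp {p : MvPolynomial (Fin n) R} {γ : Fin n →₀ ℕ}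
    (h : γ ∈ p.support) : ord.lo.le γ (ord.lp p) := by
  obtain ⟨m, hm⟩ := @Finset.max_of_mem _ ord.lo _ _ h
  have hlp : ord.lp p = m := by rw [TermOrder.lp, hm]; rfl
  rw [hlp]
  have := @Finset.le_max _ ord.lo _ _ h
  rw [hm] at this
  exact_mod_cast this

theorem coeff_eq_zero_of_lp_lt {p : MvPolynomial (Fin n) R}
    {γ : Fin n →₀ ℕ} (h : ord.lo.lt (ord.lp p) γ) : p.coeff γ = 0 := by
  by_contra hc
  exact lo_not_le_of_lt ord h (le_lp ord (mem_support_iff.mpr hc))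

theorem lp_mem_support {p : MvPolynomial (Fin n) R} (hp : p ≠ 0) :
    ord.lp p ∈ p.support := by
  have hne : p.support.Nonempty :=
    Finset.nonempty_iff_ne_empty.mpr (fun h => hp (support_eq_empty.mp h))
  obtain ⟨m, hm⟩ := @Finset.max_of_nonempty _ ord.lo _ hne
  have hlp : ord.lp p = m := by rw [TermOrder.lp, hm]; rfl
  rw [hlp]
  exact @Finset.mem_of_max _ ord.lo _ _ hm

theorem lc_ne_zero {p : MvPolynomial (Fin n) R} (hp : p ≠ 0) :
    ord.lc p ≠ 0 :=
  mem_support_iff.mp (lp_mem_support ord hp)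

theorem lp_zero : ord.lp (0 : MvPolynomial (Fin n) R) = 0 := by
  rw [TermOrder.lp]; simp

theorem lc_zero : ord.lc (0 : MvPolynomial (Fin n) R) = 0 := by
  rw [TermOrder.lc]; simp

theorem ltm_zero : ord.ltm (0 : MvPolynomial (Fin n) R) = 0 := by
  rw [TermOrder.ltm, lc_zero]; simp

theorem lp_monomial {β : Fin n →₀ ℕ} {c : R} (hc : c ≠ 0) :
    ord.lp (monomial β c) = β := by
  classical
  rw [TermOrder.lp, support_monomial, if_neg hc, @Finset.max_singleton _ ord.lo]
  rfl

theorem lc_monomial {β : Fin n →₀ ℕ} {c : R} (hc : c ≠ 0) :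
    ord.lc (monomial β c) = c := by
  rw [TermOrder.lc, lp_monomial ord hc, coeff_monomial, if_pos rfl]

end LP

end SagbiAux
namespace SagbiAux

open MvPolynomial

variable {n : ℕ} {R : Type*} [CommRing R]

section Mul
variable (ord : TermOrder n)

theorem le_lp_mul {p q : MvPolynomial (Fin n) R} {γ : Fin n →₀ ℕ}
    (hγ : γ ∈ (p * q).support) : ord.lo.le γ (ord.lp p + ord.lp q) := by
  have := support_mul p q hγ
  rw [Finset.mem_add] at this
  obtain ⟨a, ha, b, hb, rfl⟩ := this
  exact lo_add_le_add ord (le_lp ord ha) (le_lp ord hb)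

theorem coeff_mul_lp_add_lp (p q : MvPolynomial (Fin n) R) :
    (p * q).coeff (ord.lp p + ord.lp q) = ord.lc p * ord.lc q := by
  classical
  rw [coeff_mul]
  refine (Finset.sum_eq_single_of_mem (ord.lp p, ord.lp q)
    (Finset.HasAntidiagonal.mem_antidiagonal.mpr rfl) ?_).trans rfl
  · rintro ⟨c, d⟩ hmem hne
    rw [Finset.HasAntidiagonal.mem_antidiagonal] at hmem
    rcases ord.lo.le_total c (ord.lp p) with hcle | hcge
    · have hc : ord.lo.lt c (ord.lp p) ∨ c = ord.lp p := by
        rcases eq_or_ne c (ord.lp p) with h | h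
        · exact Or.inr h
        · exact Or.inl (lo_lt_of_le_ne ord hcle h)
      rcases hc with hc | rfl
      · -- then d > lp q
        have hd : ord.lo.lt (ord.lp q) d := by
          refine lo_lt_of_not_le ord fun hdle => ?_
          have := lo_add_lt_add ord hc hdle
          rw [hmem] at this
          exact lo_not_le_of_lt ord this (lo_le_refl ord _)
        rw [coeff_eq_zero_of_lp_lt ord hd, mul_zero]
      · -- c = lp p, then d = lp q, contradiction with hne
        have : d = ord.lp q := by
          have := add_left_cancel hmem
          exact this
        exact absurd (by rw [this]) hne
    · have hc : ord.lo.lt (ord.lp p) c ∨ c = ord.lp p := by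
        rcases eq_or_ne c (ord.lp p) with h | h
        · exact Or.inr h
        · exact Or.inl (lo_lt_of_le_ne ord hcge (Ne.symm h))
      rcases hc with hc | rfl
      · rw [coeff_eq_zero_of_lp_lt ord hc, zero_mul]
      · have : d = ord.lp q := add_left_cancel hmem
        exact absurd (by rw [this]) hne

variable [IsDomain R]

include ord in
theorem mul_ne_zero' {p q : MvPolynomial (Fin n) R} (hp : p ≠ 0) (hq : q ≠ 0) :
    p * q ≠ 0 := by
  intro h
  have := coeff_mul_lp_add_lp ord p q
  rw [h, coeff_zero] at this
  exact mul_ne_zero (lc_ne_zero ord hp) (lc_ne_zero ord hq) this.symm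

theorem lp_mul {p q : MvPolynomial (Fin n) R} (hp : p ≠ 0) (hq : q ≠ 0) :
    ord.lp (p * q) = ord.lp p + ord.lp q := by
  have h1 : (ord.lp p + ord.lp q) ∈ (p * q).support := by
    rw [mem_support_iff, coeff_mul_lp_add_lp]
    exact mul_ne_zero (lc_ne_zero ord hp) (lc_ne_zero ord hq)
  exact ord.lo.le_antisymm _ _
    (le_lp_mul ord (lp_mem_support ord (mul_ne_zero' ord hp hq))) (le_lp ord h1)

theorem lc_mul {p q : MvPolynomial (Fin n) R} (hp : p ≠ 0) (hq : q ≠ 0) :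
    ord.lc (p * q) = ord.lc p * ord.lc q := by
  rw [TermOrder.lc, lp_mul ord hp hq, coeff_mul_lp_add_lp]

theorem ltm_mul (p q : MvPolynomial (Fin n) R) :
    ord.ltm (p * q) = ord.ltm p * ord.ltm q := by
  rcases eq_or_ne p 0 with rfl | hp
  · rw [zero_mul, ltm_zero, zero_mul]
  rcases eq_or_ne q 0 with rfl | hq
  · rw [mul_zero, ltm_zero, mul_zero]
  rw [TermOrder.ltm, TermOrder.ltm, TermOrder.ltm, lp_mul ord hp hq, lc_mul ord hp hq,
    monomial_mul]

theorem ltm_one : ord.ltm (1 : MvPolynomial (Fin n) R) = 1 := by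
  have h1 : (1 : MvPolynomial (Fin n) R) = monomial 0 (1 : R) := by
    rw [monomial_zero']; simp
  rw [TermOrder.ltm, TermOrder.lc, h1, lp_monomial ord (one_ne_zero),
    coeff_monomial, if_pos rfl]

/-- `ltm` as a monoid hom (valid over a domain). -/
noncomputable def ltmHom : MvPolynomial (Fin n) R →* MvPolynomial (Fin n) R where
  toFun := ord.ltm
  map_one' := ltm_one ord
  map_mul' := ltm_mul ord

theorem ltm_finsuppProd {ι : Type*} (e : ι →₀ ℕ) (g : ι → MvPolynomial (Fin n) R) :
    ord.ltm (e.prod fun f k => (g f) ^ k) = e.prod fun f k => (ord.ltm (g f)) ^ k := by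
  have h1 : ord.ltm (e.prod fun f k => (g f) ^ k) =
      (ltmHom ord) (e.prod fun f k => (g f) ^ k) := rfl
  rw [h1, map_finsuppProd]
  exact Finsupp.prod_congr fun f hf => by rw [map_pow]; rfl

end Mul

end SagbiAux
namespace SagbiAux

open MvPolynomial

variable {n : ℕ} {R : Type*} [CommRing R]

section PP

variable {F : Set (MvPolynomial (Fin n) R)}

theorem isPP_one : IsPowerProduct F (1 : MvPolynomial (Fin n) R) :=
  ⟨0, by simp, by simp⟩

theorem isPP_of_mem {f : MvPolynomial (Fin n) R} (hf : f ∈ F) : IsPowerProduct F f := by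
  classical
  refine ⟨Finsupp.single f 1, ?_, ?_⟩
  · rw [Finsupp.support_single_ne_zero _ one_ne_zero]
    simpa using hf
  · rw [Finsupp.prod_single_index (by simp)]
    simp

theorem isPP_mul {q q' : MvPolynomial (Fin n) R} (h : IsPowerProduct F q)
    (h' : IsPowerProduct F q') : IsPowerProduct F (q * q') := by
  classical
  obtain ⟨e, he, rfl⟩ := h
  obtain ⟨e', he', rfl⟩ := h'
  refine ⟨e + e', ?_, ?_⟩
  · intro f hf
    have := Finsupp.support_add hf
    rw [Finset.mem_union] at this
    exact this.elim (fun h => he h) (fun h => he' h)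
  · rw [Finsupp.prod_add_index' (by simp) (fun a b₁ b₂ => pow_add _ _ _)]

theorem isPP_mem_subalgebra {A : Subalgebra R (MvPolynomial (Fin n) R)}
    (hFA : F ⊆ (A : Set (MvPolynomial (Fin n) R))) {q : MvPolynomial (Fin n) R}
    (h : IsPowerProduct F q) : q ∈ A := by
  obtain ⟨e, he, rfl⟩ := h
  rw [Finsupp.prod]
  exact prod_mem fun f hf => pow_mem (hFA (he hf)) _

variable (ord : TermOrder n) [IsDomain R]

theorem ltm_pp_mem {q : MvPolynomial (Fin n) R} (h : IsPowerProduct F q) :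
    ord.ltm q ∈ Algebra.adjoin R (ord.ltm '' F) := by
  obtain ⟨e, he, rfl⟩ := h
  rw [ltm_finsuppProd, Finsupp.prod]
  exact prod_mem fun f hf => pow_mem (Algebra.subset_adjoin (Set.mem_image_of_mem _ (he hf))) _

/-- Every element of `R[Lt F]` is an `R`-linear combination of leading terms of
`F`-power products. -/
theorem mem_adjoin_ltm_rep {x : MvPolynomial (Fin n) R}
    (hx : x ∈ Algebra.adjoin R (ord.ltm '' F)) :
    ∃ (N : ℕ) (r : Fin N → R) (q : Fin N → MvPolynomial (Fin n) R),
      (∀ i, IsPowerProduct F (q i)) ∧ x = ∑ i, r i • ord.ltm (q i) := by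
  classical
  have hspan : x ∈ Submodule.span R (ord.ltm '' {q | IsPowerProduct F q}) := by
    have h1 : x ∈ Submodule.span R (Submonoid.closure (ord.ltm '' F) :
        Set (MvPolynomial (Fin n) R)) := by
      rw [← Algebra.adjoin_eq_span]; exact hx
    refine Submodule.span_mono ?_ h1
    intro y hy
    induction (hy : y ∈ Submonoid.closure (ord.ltm '' F)) using Submonoid.closure_induction with
    | mem z hz => obtain ⟨f, hf, rfl⟩ := hz; exact ⟨f, isPP_of_mem hf, rfl⟩
    | one => exact ⟨1, isPP_one, ltm_one ord⟩
    | mul a b ha hb iha ihb =>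
        obtain ⟨qa, hqa, rfl⟩ := iha
        obtain ⟨qb, hqb, rfl⟩ := ihb
        exact ⟨qa * qb, isPP_mul hqa hqb, ltm_mul ord qa qb⟩
  rw [Submodule.mem_span_set'] at hspan
  obtain ⟨N, r, g, hg⟩ := hspan
  choose q hq hq2 using fun i => (g i).2
  exact ⟨N, r, q, hq, by rw [← hg]; exact Finset.sum_congr rfl fun i _ => by rw [hq2 i]⟩

/-- If a monomial with nonzero coefficient lies in `R[Lt F]` then there is data for an
s-reduction step of that coefficient. -/
theorem exists_sstep_data {β : Fin n →₀ ℕ} {c : R} (hc : c ≠ 0)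
    (hmem : (monomial β c : MvPolynomial (Fin n) R) ∈ Algebra.adjoin R (ord.ltm '' F)) :
    ∃ (N : ℕ) (q : Fin N → MvPolynomial (Fin n) R) (r : Fin N → R),
      (∀ i, IsPowerProduct F (q i) ∧ q i ≠ 0 ∧ ord.lp (q i) = β) ∧
      c = ∑ i, r i * ord.lc (q i) := by
  classical
  obtain ⟨N, r, q, hq, heq⟩ := mem_adjoin_ltm_rep ord hmem
  have hcoeff : c = ∑ i, r i * (ord.ltm (q i)).coeff β := by
    have := congrArg (fun p => MvPolynomial.coeff β p) heq
    simpa [coeff_monomial, if_pos rfl, MvPolynomial.coeff_sum] using this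
  set s : Finset (Fin N) := Finset.univ.filter (fun i => q i ≠ 0 ∧ ord.lp (q i) = β) with hs
  have hsum : c = ∑ i ∈ s, r i * ord.lc (q i) := by
    rw [hcoeff, hs, Finset.sum_filter]
    refine Finset.sum_congr rfl fun i _ => ?_
    by_cases h1 : q i ≠ 0 ∧ ord.lp (q i) = β
    · rw [if_pos h1, TermOrder.ltm, coeff_monomial, if_pos h1.2]
    · rw [if_neg h1]
      rcases eq_or_ne (q i) 0 with h0 | h0
      · rw [h0, ltm_zero, coeff_zero, mul_zero]
      · have h2 : ord.lp (q i) ≠ β := fun hh => h1 ⟨h0, hh⟩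
        rw [TermOrder.ltm, coeff_monomial, if_neg h2, mul_zero]
  refine ⟨s.card, fun j => q (s.equivFin.symm j), fun j => r (s.equivFin.symm j), ?_, ?_⟩
  · intro j
    have hj : q ↑(s.equivFin.symm j) ≠ 0 ∧ ord.lp (q ↑(s.equivFin.symm j)) = β :=
      (Finset.mem_filter.mp (s.equivFin.symm j).2).2
    exact ⟨hq _, hj.1, hj.2⟩
  · rw [hsum]
    rw [← Finset.sum_coe_sort s (fun i => r i * ord.lc (q i))]
    exact (Equiv.sum_comp s.equivFin.symm
      (fun i => r (i : Fin N) * ord.lc (q (i : Fin N)))).symm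

end PP

end SagbiAux
namespace SagbiAux

open MvPolynomial

variable {n : ℕ} {R : Type*} [CommRing R]

section Step

variable (ord : TermOrder n) {F : Set (MvPolynomial (Fin n) R)}

theorem coeff_step_sum_gt {N : ℕ} {q : Fin N → MvPolynomial (Fin n) R} {r : Fin N → R}
    {β γ : Fin n →₀ ℕ} (hq : ∀ i, ord.lp (q i) = β) (hγ : ord.lo.lt β γ) :
    (∑ i, C (r i) * q i).coeff γ = 0 := by
  rw [coeff_sum]
  refine Finset.sum_eq_zero fun i _ => ?_
  rw [coeff_C_mul, coeff_eq_zero_of_lp_lt ord (by rw [hq i]; exact hγ), mul_zero]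

theorem coeff_step_sum_self {N : ℕ} {q : Fin N → MvPolynomial (Fin n) R} {r : Fin N → R}
    {β : Fin n →₀ ℕ} (hq : ∀ i, ord.lp (q i) = β) :
    (∑ i, C (r i) * q i).coeff β = ∑ i, r i * ord.lc (q i) := by
  rw [coeff_sum]
  refine Finset.sum_congr rfl fun i _ => ?_
  rw [coeff_C_mul, TermOrder.lc, hq i]

theorem sstep_coeff_gt {g h : MvPolynomial (Fin n) R} (hst : SStep ord F g h) :
    ∃ β, g.coeff β ≠ 0 ∧ h.coeff β = 0 ∧
      ∀ γ, ord.lo.lt β γ → h.coeff γ = g.coeff γ := by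
  obtain ⟨β, N, q, r, hβ, hqs, hcsum, rfl⟩ := hst
  refine ⟨β, hβ, ?_, fun γ hγ => ?_⟩
  · rw [coeff_sub, coeff_step_sum_self ord (fun i => (hqs i).2.2), ← hcsum, sub_self]
  · rw [coeff_sub, coeff_step_sum_gt ord (fun i => (hqs i).2.2) hγ, sub_zero]

open scoped Classical in
/-- The support-indicator of a polynomial, used as a termination measure. -/
noncomputable def indic (g : MvPolynomial (Fin n) R) : (Fin n →₀ ℕ) →₀ ℕ :=
  Finsupp.mapRange (fun c => if c = 0 then 0 else 1) (by simp) (AddMonoidAlgebra.coeff g)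

theorem indic_eq_zero {g : MvPolynomial (Fin n) R} {β : Fin n →₀ ℕ}
    (h : g.coeff β = 0) : indic g β = 0 := by
  classical
  rw [indic, Finsupp.mapRange_apply]
  show (if g.coeff β = 0 then (0:ℕ) else 1) = 0
  rw [if_pos h]

theorem indic_eq_one {g : MvPolynomial (Fin n) R} {β : Fin n →₀ ℕ}
    (h : g.coeff β ≠ 0) : indic g β = 1 := by
  classical
  rw [indic, Finsupp.mapRange_apply]
  show (if g.coeff β = 0 then (0:ℕ) else 1) = 1
  rw [if_neg h]

theorem sstep_wf : WellFounded (fun h g : MvPolynomial (Fin n) R => SStep ord F g h) := by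
  have htri : IsTrichotomous (Fin n →₀ ℕ) (fun a b => ord.lo.lt b a) := by
    constructor
    intro a b h1 h2
    by_contra hne
    rcases ord.lo.le_total a b with h | h
    · exact h2 (lo_lt_of_le_ne ord h hne)
    · exact h1 (lo_lt_of_le_ne ord h (Ne.symm hne))
  have hlex : WellFounded (Finsupp.Lex (fun a b : Fin n →₀ ℕ => ord.lo.lt b a)
      (fun a b : ℕ => a < b)) :=
    @Finsupp.Lex.wellFounded' _ _ _ _ _ (fun k hk => Nat.not_lt_zero k hk)
      Nat.lt_wfRel.wf htri ord.wf
  refine Subrelation.wf (r := InvImage (Finsupp.Lex (fun a b : Fin n →₀ ℕ => ord.lo.lt b a)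
      (fun a b : ℕ => a < b)) indic) ?_ (InvImage.wf indic hlex)
  intro h g hst
  obtain ⟨β, hgβ, hhβ, hgt⟩ := sstep_coeff_gt ord hst
  refine ⟨β, fun d hd => ?_, ?_⟩
  · rcases eq_or_ne (g.coeff d) 0 with h0 | h0
    · rw [indic_eq_zero (by rw [hgt d hd]; exact h0), indic_eq_zero h0]
    · rw [indic_eq_one (by rw [hgt d hd]; exact h0), indic_eq_one h0]
  · rw [indic_eq_zero hhβ, indic_eq_one hgβ]
    exact Nat.zero_lt_one

theorem exists_final (g : MvPolynomial (Fin n) R) :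
    ∃ h, SReduce ord F g h ∧ ∀ h', ¬ SStep ord F h h' := by
  refine WellFounded.induction (sstep_wf ord (F := F))
    (C := fun g => ∃ h, SReduce ord F g h ∧ ∀ h', ¬ SStep ord F h h') g ?_
  intro g ih
  by_cases hstep : ∃ g', SStep ord F g g'
  · obtain ⟨g', hg'⟩ := hstep
    obtain ⟨h, hred, hfin⟩ := ih g' hg'
    exact ⟨h, Relation.ReflTransGen.head hg' hred, hfin⟩
  · exact ⟨g, Relation.ReflTransGen.refl, fun h' hs => hstep ⟨h', hs⟩⟩

theorem sreduce_mem {A : Subalgebra R (MvPolynomial (Fin n) R)}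
    (hFA : F ⊆ (A : Set (MvPolynomial (Fin n) R))) {g h : MvPolynomial (Fin n) R}
    (hred : SReduce ord F g h) (hg : g ∈ A) : h ∈ A := by
  induction hred with
  | refl => exact hg
  | tail _hab hst ih =>
    obtain ⟨β, N, q, r, _, hqs, _, rfl⟩ := hst
    refine sub_mem ih (Subalgebra.sum_mem A fun i _ => ?_)
    have hC : (C (r i) : MvPolynomial (Fin n) R) ∈ A := by
      rw [← MvPolynomial.algebraMap_eq]
      exact Subalgebra.algebraMap_mem A (r i)
    exact mul_mem hC (isPP_mem_subalgebra hFA (hqs i).1)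

variable [IsDomain R]

theorem ltm_mem_of_sreduce_zero {g : MvPolynomial (Fin n) R}
    (hred : SReduce ord F g 0) :
    g ≠ 0 → ord.ltm g ∈ Algebra.adjoin R (ord.ltm '' F) := by
  refine Relation.ReflTransGen.head_induction_on
    (motive := fun a _ => a ≠ 0 → ord.ltm a ∈ Algebra.adjoin R (ord.ltm '' F)) hred
    (fun hg => absurd rfl hg) ?_
  intro a c hst _hrest ih ha
  obtain ⟨β, N, q, r, hβ, hqs, hcsum, rfl⟩ := hst
  rcases eq_or_ne β (ord.lp a) with rfl | hne
  · -- reduction happened at the leading power product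
    have h1 : ord.ltm a = ∑ i, C (r i) * ord.ltm (q i) := by
      rw [TermOrder.ltm, TermOrder.lc, hcsum, map_sum]
      refine Finset.sum_congr rfl fun i _ => ?_
      rw [TermOrder.ltm, C_mul_monomial, (hqs i).2.2]
    rw [h1]
    refine Subalgebra.sum_mem _ fun i _ => ?_
    have hC : (C (r i) : MvPolynomial (Fin n) R) ∈ Algebra.adjoin R (ord.ltm '' F) := by
      rw [← MvPolynomial.algebraMap_eq]
      exact Subalgebra.algebraMap_mem _ (r i)
    exact mul_mem hC (ltm_pp_mem ord (hqs i).1)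
  · -- reduction happened strictly below the leading power product
    have hβlt : ord.lo.lt β (ord.lp a) :=
      lo_lt_of_le_ne ord (le_lp ord (mem_support_iff.mpr hβ)) hne
    set c := a - ∑ i, C (r i) * q i with hc
    have hcoeffgt : ∀ γ, ord.lo.lt β γ → c.coeff γ = a.coeff γ := by
      intro γ hγ
      rw [hc, coeff_sub, coeff_step_sum_gt ord (fun i => (hqs i).2.2) hγ, sub_zero]
    have hctop : c.coeff (ord.lp a) = ord.lc a := hcoeffgt _ hβlt
    have hc0 : c ≠ 0 := fun h0 => by
      rw [h0, coeff_zero] at hctop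
      exact lc_ne_zero ord ha hctop.symm
    have hlpc : ord.lp c = ord.lp a := by
      refine ord.lo.le_antisymm _ _ ?_ ?_
      · -- every element of supp c is ≤ lp a
        have hmem := lp_mem_support ord hc0
        rw [mem_support_iff] at hmem
        by_contra hgt
        have hlt : ord.lo.lt (ord.lp a) (ord.lp c) := lo_lt_of_not_le ord hgt
        have : c.coeff (ord.lp c) = a.coeff (ord.lp c) :=
          hcoeffgt _ (lo_lt_of_lt_of_le ord hβlt (lo_le_of_lt ord hlt))
        rw [this, coeff_eq_zero_of_lp_lt ord hlt] at hmem
        exact hmem rfl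
      · refine le_lp ord (mem_support_iff.mpr ?_)
        rw [hctop]
        exact lc_ne_zero ord ha
    have hltm : ord.ltm c = ord.ltm a := by
      rw [TermOrder.ltm, TermOrder.ltm, hlpc, TermOrder.lc, TermOrder.lc, hlpc, hctop]
      rfl
    rw [← hltm]
    exact ih hc0

end Step

end SagbiAux
/-- `F ⊆ A` is a SAGBI basis for `A` iff for every nonzero `a ∈ A`,
every final s-reductum of `a` via `F` is `0`. -/
theorem isSAGBI_iff_final_sreductum_eq_zero {n : ℕ} {R : Type*} [CommRing R]
    [IsDomain R] [IsNoetherianRing R] (ord : TermOrder n)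
    (A : Subalgebra R (MvPolynomial (Fin n) R)) (F : Set (MvPolynomial (Fin n) R))
    (hFA : F ⊆ (A : Set (MvPolynomial (Fin n) R))) :
    IsSAGBI ord A F ↔
      ∀ a ∈ A, a ≠ 0 → ∀ h : MvPolynomial (Fin n) R, SReduce ord F a h →
        (∀ h' : MvPolynomial (Fin n) R, ¬ SStep ord F h h') → h = 0 := by
  constructor
  · intro hsagbi a haA ha0 h hred hfin
    by_contra hne
    have hs : Algebra.adjoin R (ord.ltm '' (A : Set (MvPolynomial (Fin n) R))) =
        Algebra.adjoin R (ord.ltm '' F) := hsagbi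
    have hhA : h ∈ A := SagbiAux.sreduce_mem ord hFA hred haA
    have hmem : ord.ltm h ∈ Algebra.adjoin R (ord.ltm '' F) := by
      rw [← hs]
      exact Algebra.subset_adjoin (Set.mem_image_of_mem _ hhA)
    rw [TermOrder.ltm] at hmem
    obtain ⟨N, q, r, hqs, hcs⟩ :=
      SagbiAux.exists_sstep_data ord (SagbiAux.lc_ne_zero ord hne) hmem
    exact hfin _ ⟨ord.lp h, N, q, r, SagbiAux.lc_ne_zero ord hne, hqs, hcs, rfl⟩
  · intro hyp
    show Algebra.adjoin R (ord.ltm '' (A : Set (MvPolynomial (Fin n) R))) =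
        Algebra.adjoin R (ord.ltm '' F)
    refine le_antisymm ?_ (Algebra.adjoin_mono (Set.image_mono (f := ord.ltm) hFA))
    rw [Algebra.adjoin_le_iff]
    rintro x ⟨a, haA, rfl⟩
    rcases eq_or_ne a 0 with rfl | ha0
    · rw [SagbiAux.ltm_zero]
      exact Subalgebra.zero_mem _
    obtain ⟨h, hred, hfin⟩ := SagbiAux.exists_final ord (F := F) a
    have h0 : h = 0 := hyp a haA ha0 h hred hfin
    subst h0
    exact SagbiAux.ltm_mem_of_sreduce_zero ord hred ha0
end

section
/- Suppose F is a SAGBI basis for A. Then an element p ∈ R[X] belongs to A if and only if p s-reduces to 0 via F. -/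
open MvPolynomial

variable {n : ℕ} {R : Type*} [CommRing R]

/-! ### Auxiliary lemmas -/

namespace TermOrder

variable (ord : TermOrder n)

theorem lp_mem_support {p : MvPolynomial (Fin n) R} (hp : p ≠ 0) :
    ord.lp p ∈ p.support := by
  letI := ord.lo
  have h : p.support.Nonempty := MvPolynomial.support_nonempty.mpr hp
  obtain ⟨a, ha⟩ := Finset.max_of_nonempty h
  have : ord.lp p = a := by simp [TermOrder.lp, ha]
  rw [this]
  exact Finset.mem_of_max ha

theorem lc_ne_zero {p : MvPolynomial (Fin n) R} (hp : p ≠ 0) : ord.lc p ≠ 0 :=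
  MvPolynomial.mem_support_iff.mp (ord.lp_mem_support hp)

theorem le_lp {p : MvPolynomial (Fin n) R} {γ : Fin n →₀ ℕ} (h : γ ∈ p.support) :
    ord.lo.le γ (ord.lp p) := by
  letI := ord.lo
  have hp : p ≠ 0 := by
    rintro rfl; simp at h
  have hne : p.support.Nonempty := MvPolynomial.support_nonempty.mpr hp
  obtain ⟨a, ha⟩ := Finset.max_of_nonempty hne
  have hlp : ord.lp p = a := by simp [TermOrder.lp, ha]
  rw [hlp]
  have := Finset.le_max h
  rw [ha] at this
  exact_mod_cast this

theorem coeff_eq_zero {p : MvPolynomial (Fin n) R} {γ : Fin n →₀ ℕ}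
    (h : ¬ ord.lo.le γ (ord.lp p)) : p.coeff γ = 0 := by
  by_contra hc
  exact h (ord.le_lp (MvPolynomial.mem_support_iff.mpr hc))

theorem lp_eq_of {p : MvPolynomial (Fin n) R} {δ : Fin n →₀ ℕ}
    (h1 : δ ∈ p.support) (h2 : ∀ γ ∈ p.support, ord.lo.le γ δ) : ord.lp p = δ := by
  letI := ord.lo
  have hp : p ≠ 0 := by rintro rfl; simp at h1
  exact ord.lo.le_antisymm _ _ (h2 _ (ord.lp_mem_support hp)) (ord.le_lp h1)

private theorem add_cancel_aux {a b : Fin n →₀ ℕ} (c : Fin n →₀ ℕ)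
    (h : a + c = b + c) : a = b := by
  ext x
  have := DFunLike.congr_fun h x
  simp only [Finsupp.add_apply] at this
  omega

set_option maxHeartbeats 1000000 in
theorem mul_key [IsDomain R] {f g : MvPolynomial (Fin n) R} (hf : f ≠ 0) (hg : g ≠ 0) :
    f * g ≠ 0 ∧ ord.lp (f * g) = ord.lp f + ord.lp g ∧
      ord.lc (f * g) = ord.lc f * ord.lc g := by
  have key : (f * g).coeff (ord.lp f + ord.lp g) = ord.lc f * ord.lc g := by
    rw [MvPolynomial.coeff_mul]
    rw [Finset.sum_eq_single (ord.lp f, ord.lp g)]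
    · rfl
    · rintro ⟨a, b⟩ hab hne
      rw [Finset.HasAntidiagonal.mem_antidiagonal] at hab
      by_cases ha : a ∈ f.support
      · by_cases hb : b ∈ g.support
        · exfalso; apply hne
          have h1 : ord.lo.le a (ord.lp f) := ord.le_lp ha
          have h2 : ord.lo.le b (ord.lp g) := ord.le_lp hb
          have e1 : ord.lo.le (a + b) (ord.lp f + b) := ord.add_le_add _ _ _ h1
          have e2 : ord.lo.le (ord.lp f + b) (ord.lp f + ord.lp g) := by
            rw [add_comm (ord.lp f) b, add_comm (ord.lp f) (ord.lp g)]
            exact ord.add_le_add _ _ _ h2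
          rw [← hab] at e2
          have hbd : ord.lp f + b = a + b := ord.lo.le_antisymm _ _ e2 (hab ▸ e1)
          have hA : a = ord.lp f := (add_cancel_aux b hbd.symm)
          have hB : b = ord.lp g := by
            rw [hA] at hab
            ext x
            have := DFunLike.congr_fun hab x
            simp only [Finsupp.add_apply] at this
            omega
          exact Prod.ext hA hB
        · rw [MvPolynomial.notMem_support_iff.mp hb, mul_zero]
      · rw [MvPolynomial.notMem_support_iff.mp ha, zero_mul]
    · intro hnm
      simp [Finset.HasAntidiagonal.mem_antidiagonal] at hnm
  have hne : ord.lc f * ord.lc g ≠ 0 := mul_ne_zero (ord.lc_ne_zero hf) (ord.lc_ne_zero hg)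
  have hfg : f * g ≠ 0 := by
    intro h0
    rw [h0, MvPolynomial.coeff_zero] at key
    exact hne key.symm
  have hmem : ord.lp f + ord.lp g ∈ (f * g).support :=
    MvPolynomial.mem_support_iff.mpr (key ▸ hne)
  have hlp : ord.lp (f * g) = ord.lp f + ord.lp g := by
    apply ord.lp_eq_of hmem
    intro γ hγ
    obtain ⟨a, ha, b, hb, hab⟩ := Finset.mem_add.mp (MvPolynomial.support_mul f g hγ)
    subst hab
    have h1 : ord.lo.le a (ord.lp f) := ord.le_lp ha
    have h2 : ord.lo.le b (ord.lp g) := ord.le_lp hb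
    have e1 : ord.lo.le (a + b) (ord.lp f + b) := ord.add_le_add _ _ _ h1
    have e2 : ord.lo.le (ord.lp f + b) (ord.lp f + ord.lp g) := by
      rw [add_comm (ord.lp f) b, add_comm (ord.lp f) (ord.lp g)]
      exact ord.add_le_add _ _ _ h2
    exact ord.lo.le_trans _ _ _ e1 e2
  exact ⟨hfg, hlp, by rw [TermOrder.lc, hlp, key]⟩

theorem ltm_mul [IsDomain R] {f g : MvPolynomial (Fin n) R} (hf : f ≠ 0) (hg : g ≠ 0) :
    ord.ltm (f * g) = ord.ltm f * ord.ltm g := by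
  obtain ⟨_, hlp, hlc⟩ := ord.mul_key hf hg
  rw [TermOrder.ltm, TermOrder.ltm, TermOrder.ltm, hlp, hlc, MvPolynomial.monomial_mul]

theorem lp_one [Nontrivial R] : ord.lp (1 : MvPolynomial (Fin n) R) = 0 := by
  letI := ord.lo
  apply ord.lp_eq_of
  · simp [MvPolynomial.mem_support_iff]
  · intro γ hγ
    have : (1 : MvPolynomial (Fin n) R).coeff γ ≠ 0 := MvPolynomial.mem_support_iff.mp hγ
    rw [MvPolynomial.coeff_one] at this
    by_cases h : (0 : Fin n →₀ ℕ) = γ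
    · exact h ▸ ord.lo.le_refl 0
    · simp [h] at this

theorem ltm_one [Nontrivial R] : ord.ltm (1 : MvPolynomial (Fin n) R) = 1 := by
  rw [TermOrder.ltm, TermOrder.lc, ord.lp_one, MvPolynomial.coeff_one]
  simp

end TermOrder

theorem IsPowerProduct.one {F : Set (MvPolynomial (Fin n) R)} :
    IsPowerProduct F (1 : MvPolynomial (Fin n) R) :=
  ⟨0, by simp⟩

theorem IsPowerProduct.mul {F : Set (MvPolynomial (Fin n) R)}
    {q q' : MvPolynomial (Fin n) R} (h : IsPowerProduct F q) (h' : IsPowerProduct F q') :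
    IsPowerProduct F (q * q') := by
  classical
  obtain ⟨e, he, rfl⟩ := h
  obtain ⟨e', he', rfl⟩ := h'
  refine ⟨e + e', ?_, ?_⟩
  · intro x hx
    have := Finsupp.support_add (Finset.mem_coe.mp hx)
    rcases Finset.mem_union.mp this with h | h
    · exact he h
    · exact he' h
  · rw [Finsupp.prod_add_index' (fun f => pow_zero f) (fun f a b => pow_add f a b)]

theorem IsPowerProduct.single {F : Set (MvPolynomial (Fin n) R)}
    {f : MvPolynomial (Fin n) R} (hf : f ∈ F) : IsPowerProduct F f := by
  refine ⟨Finsupp.single f 1, ?_, ?_⟩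
  · intro x hx
    have : x ∈ (Finsupp.single f 1).support := Finset.mem_coe.mp hx
    rw [Finsupp.support_single_ne_zero f one_ne_zero] at this
    rw [Finset.mem_singleton.mp this]
    exact hf
  · rw [Finsupp.prod_single_index (pow_zero f), pow_one]

theorem IsPowerProduct.mem {F : Set (MvPolynomial (Fin n) R)}
    {A : Subalgebra R (MvPolynomial (Fin n) R)} (hFA : F ⊆ (A : Set (MvPolynomial (Fin n) R)))
    {q : MvPolynomial (Fin n) R} (h : IsPowerProduct F q) : q ∈ A := by
  obtain ⟨e, he, rfl⟩ := h
  exact prod_mem (fun f hf => pow_mem (hFA (he hf)) _)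

/-- Every element of the multiplicative closure of `Lt F` is (if nonzero) the
leading term of a nonzero `F`-power product. -/
theorem exists_pp [IsDomain R] (ord : TermOrder n) {F : Set (MvPolynomial (Fin n) R)}
    {m : MvPolynomial (Fin n) R} (hm : m ∈ Submonoid.closure (ord.ltm '' F)) :
    ∃ q, IsPowerProduct F q ∧ (m ≠ 0 → q ≠ 0 ∧ ord.ltm q = m) := by
  induction hm using Submonoid.closure_induction with
  | mem x hx =>
      obtain ⟨f, hf, rfl⟩ := hx
      by_cases h0 : f = 0
      · exact ⟨1, IsPowerProduct.one, fun h =>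
          absurd (by simp [h0, TermOrder.ltm, TermOrder.lc]) h⟩
      · exact ⟨f, IsPowerProduct.single hf, fun _ => ⟨h0, rfl⟩⟩
  | one => exact ⟨1, IsPowerProduct.one, fun _ => ⟨one_ne_zero, ord.ltm_one⟩⟩
  | mul x y _ _ ihx ihy =>
      obtain ⟨q, hq, hq'⟩ := ihx
      obtain ⟨q', hq2, hq2'⟩ := ihy
      refine ⟨q * q', hq.mul hq2, fun hxy => ?_⟩
      have hx0 : x ≠ 0 := fun h => hxy (by simp [h])
      have hy0 : y ≠ 0 := fun h => hxy (by simp [h])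
      obtain ⟨hqne, hqe⟩ := hq' hx0
      obtain ⟨hq'ne, hq'e⟩ := hq2' hy0
      exact ⟨mul_ne_zero hqne hq'ne, by rw [ord.ltm_mul hqne hq'ne, hqe, hq'e]⟩

private theorem lo_lt_of (ord : TermOrder n) {a b : Fin n →₀ ℕ}
    (h1 : ord.lo.le a b) (h2 : ¬ ord.lo.le b a) : ord.lo.lt a b :=
  (@lt_iff_le_not_ge _ ord.lo.toPartialOrder.toPreorder a b).mpr ⟨h1, h2⟩

/-- Key step: a nonzero element of `A` admits one s-reduction step via a SAGBI
basis `F`, to an element of `A` all of whose monomials are strictly smaller. -/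
theorem exists_step [IsDomain R] (ord : TermOrder n)
    {A : Subalgebra R (MvPolynomial (Fin n) R)} {F : Set (MvPolynomial (Fin n) R)}
    (hF : IsSAGBI ord A F)
    {p : MvPolynomial (Fin n) R} (hp : p ∈ A) (hp0 : p ≠ 0) :
    ∃ h, SStep ord F p h ∧ ∀ γ ∈ h.support, ord.lo.lt γ (ord.lp p) := by
  classical
  set β := ord.lp p with hβ
  have hmem : ord.ltm p ∈ Submodule.span R
      ((Submonoid.closure (ord.ltm '' F) : Submonoid (MvPolynomial (Fin n) R)) :
        Set (MvPolynomial (Fin n) R)) := by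
    rw [← Algebra.adjoin_eq_span]
    have h1 : ord.ltm p ∈ Algebra.adjoin R (ord.ltm '' (A : Set (MvPolynomial (Fin n) R))) :=
      Algebra.subset_adjoin ⟨p, hp, rfl⟩
    rw [hF] at h1
    exact h1
  obtain ⟨N, r, g, hsum⟩ := Submodule.mem_span_set'.mp hmem
  have hq : ∀ i : Fin N, ∃ q, IsPowerProduct F q ∧
      ((g i : MvPolynomial (Fin n) R) ≠ 0 → q ≠ 0 ∧ ord.ltm q = g i) :=
    fun i => exists_pp ord (g i).2
  choose q hq1 hq2 using hq
  set P : Fin N → Prop := fun i =>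
    (g i : MvPolynomial (Fin n) R) ≠ 0 ∧ ord.lp (q i) = β with hPdef
  have hcoeff : ∀ i : Fin N, ((g i : MvPolynomial (Fin n) R)).coeff β =
      if P i then ord.lc (q i) else 0 := by
    intro i
    by_cases h0 : (g i : MvPolynomial (Fin n) R) = 0
    · simp [h0, hPdef]
    · obtain ⟨hqne, hqe⟩ := hq2 i h0
      conv_lhs => rw [← hqe, TermOrder.ltm]
      rw [MvPolynomial.coeff_monomial]
      by_cases hl : ord.lp (q i) = β
      · simp [hl, hPdef, h0]
      · simp [hl, hPdef, h0]
  have hlc : ord.lc p = ∑ i, r i * ((g i : MvPolynomial (Fin n) R)).coeff β := by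
    have h2 := congrArg (fun x : MvPolynomial (Fin n) R => x.coeff β) hsum
    simp only [MvPolynomial.coeff_sum, MvPolynomial.coeff_smul, smul_eq_mul] at h2
    rw [h2, TermOrder.ltm, MvPolynomial.coeff_monomial, if_pos rfl]
  have hlcP : ord.lc p = ∑ i, if P i then r i * ord.lc (q i) else 0 := by
    rw [hlc]
    refine Finset.sum_congr rfl fun i _ => ?_
    rw [hcoeff i]
    by_cases h : P i <;> simp [h]
  have hex : ∃ i, P i := by
    by_contra hno
    push_neg at hno
    apply ord.lc_ne_zero hp0
    rw [hlcP]
    exact Finset.sum_eq_zero fun i _ => by simp [hno i]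
  obtain ⟨j0, hj0⟩ := hex
  set q' : Fin N → MvPolynomial (Fin n) R := fun i => if P i then q i else q j0 with hq'def
  set r' : Fin N → R := fun i => if P i then r i else 0 with hr'def
  have hq'prop : ∀ i, IsPowerProduct F (q' i) ∧ q' i ≠ 0 ∧ ord.lp (q' i) = β := by
    intro i
    by_cases h : P i
    · simp only [hq'def, if_pos h]
      exact ⟨hq1 i, (hq2 i h.1).1, h.2⟩
    · simp only [hq'def, if_neg h]
      exact ⟨hq1 j0, (hq2 j0 hj0.1).1, hj0.2⟩
  have hsum' : p.coeff β = ∑ i, r' i * ord.lc (q' i) := by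
    have : p.coeff β = ord.lc p := rfl
    rw [this, hlcP]
    refine Finset.sum_congr rfl fun i _ => ?_
    by_cases h : P i
    · simp only [hq'def, hr'def, if_pos h]
    · simp only [hq'def, hr'def, if_neg h, zero_mul]
  have hpβ : p.coeff β ≠ 0 := ord.lc_ne_zero hp0
  refine ⟨p - ∑ i, C (r' i) * q' i,
    ⟨β, N, q', r', hpβ, hq'prop, hsum', rfl⟩, ?_⟩
  intro γ hγ
  have hγne : (p - ∑ i, C (r' i) * q' i).coeff γ ≠ 0 := MvPolynomial.mem_support_iff.mp hγ
  have hcγ : (p - ∑ i, C (r' i) * q' i).coeff γ =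
      p.coeff γ - ∑ i, r' i * (q' i).coeff γ := by
    rw [MvPolynomial.coeff_sub, MvPolynomial.coeff_sum]
    congr 1
    exact Finset.sum_congr rfl fun i _ => MvPolynomial.coeff_C_mul _ _ _
  by_contra hcon
  have hle : ord.lo.le β γ := by
    by_contra hnle
    rcases ord.lo.le_total β γ with h | h
    · exact hnle h
    · exact hcon (lo_lt_of ord h hnle)
  by_cases heq : γ = β
  · subst heq
    apply hγne
    rw [hcγ, hsum']
    rw [sub_eq_zero]
    refine Finset.sum_congr rfl fun i _ => ?_
    have hcc : (q' i).coeff β = ord.lc (q' i) := by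
      rw [TermOrder.lc, (hq'prop i).2.2]
    rw [hcc]
  · have hltβγ : ¬ ord.lo.le γ β := by
      intro h2
      exact heq (ord.lo.le_antisymm _ _ h2 hle)
    apply hγne
    rw [hcγ]
    have h1 : p.coeff γ = 0 := ord.coeff_eq_zero (by rw [← hβ]; exact hltβγ)
    have h2 : ∀ i : Fin N, (q' i).coeff γ = 0 := fun i =>
      ord.coeff_eq_zero (by rw [(hq'prop i).2.2]; exact hltβγ)
    rw [h1]
    simp [h2]

/-- If `p` s-reduces to some `h ∈ A`, then `p ∈ A`. -/
theorem mem_of_sreduce (ord : TermOrder n)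
    {A : Subalgebra R (MvPolynomial (Fin n) R)} {F : Set (MvPolynomial (Fin n) R)}
    (hFA : F ⊆ (A : Set (MvPolynomial (Fin n) R)))
    {p h : MvPolynomial (Fin n) R} (hr : SReduce ord F p h) (hh : h ∈ A) : p ∈ A := by
  induction hr using Relation.ReflTransGen.head_induction_on with
  | refl => exact hh
  | head hstep _ ih =>
      obtain ⟨β, N, q, r, _, hq, _, heq⟩ := hstep
      have : _ = _ + _ := (sub_eq_iff_eq_add.mp heq.symm)
      rw [this]
      refine A.add_mem ih (Subalgebra.sum_mem A fun i _ => A.mul_mem ?_ ((hq i).1.mem hFA))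
      rw [← MvPolynomial.algebraMap_eq]
      exact A.algebraMap_mem _

/-- if `F` is a SAGBI basis for `A`, then `p ∈ A` iff `p`
s-reduces to `0` via `F`. -/
theorem mem_iff_sreduce_zero {n : ℕ} {R : Type*} [CommRing R] [IsDomain R]
    [IsNoetherianRing R] (ord : TermOrder n)
    (A : Subalgebra R (MvPolynomial (Fin n) R)) (F : Set (MvPolynomial (Fin n) R))
    (hFA : F ⊆ (A : Set (MvPolynomial (Fin n) R))) (hF : IsSAGBI ord A F) :
    ∀ p : MvPolynomial (Fin n) R, p ∈ A ↔ SReduce ord F p 0 := by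
  intro p
  constructor
  · intro hp
    have main : ∀ β : Fin n →₀ ℕ, ∀ p : MvPolynomial (Fin n) R,
        p ∈ A → ord.lp p = β → SReduce ord F p 0 := by
      intro β
      induction β using WellFounded.induction ord.wf with
      | _ β ih =>
        intro p hpA hlp
        by_cases hp0 : p = 0
        · subst hp0; exact Relation.ReflTransGen.refl
        · obtain ⟨h, hstep, hsupp⟩ := exists_step ord hF hpA hp0
          have hhA : h ∈ A := by
            obtain ⟨β', N, q, r, _, hq, _, heq⟩ := hstep
            rw [heq]
            refine A.sub_mem hpA (Subalgebra.sum_mem A fun i _ => A.mul_mem ?_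
              ((hq i).1.mem hFA))
            rw [← MvPolynomial.algebraMap_eq]
            exact A.algebraMap_mem _
          by_cases hh0 : h = 0
          · subst hh0; exact Relation.ReflTransGen.single hstep
          · have hlt : ord.lo.lt (ord.lp h) β :=
              hlp ▸ hsupp _ (ord.lp_mem_support hh0)
            exact Relation.ReflTransGen.head hstep (ih _ hlt h hhA rfl)
    exact main _ p hp rfl
  · intro hred
    exact mem_of_sreduce ord hFA hred A.zero_mem
end

section
/- Let G ⊆ A. Every chain of one-step si-reductions via G must terminate; that is, there is no infinite sequence h_0, h_1, h_2, … in A such that h_j si-reduces to h_{j+1} via G in one step for every j. Consequently every h ∈ A has a final si-reductum via G (an element obtained from h by a finite chain of one-step si-reductions that cannot be further si-reduced via G). -/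
open MvPolynomial

variable {n : ℕ} {R : Type*} [CommRing R]

section Aux

open Classical in
/-- Indicator finsupp of the support of a polynomial. -/
noncomputable def siInd (p : MvPolynomial (Fin n) R) : (Fin n →₀ ℕ) →₀ ℕ :=
  ⟨p.support, fun α => if p.coeff α = 0 then 0 else 1, fun α => by
    by_cases h : p.coeff α = 0 <;> simp [MvPolynomial.mem_support_iff, h]⟩

open Classical in
theorem siInd_apply (p : MvPolynomial (Fin n) R) (α : Fin n →₀ ℕ) :
    siInd p α = if p.coeff α = 0 then 0 else 1 := rfl

theorem coeff_eq_zero_of_lp_lt_s8 (ord : TermOrder n) {p : MvPolynomial (Fin n) R}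
    {β : Fin n →₀ ℕ} (hp : p ≠ 0) (h : ord.lo.lt (ord.lp p) β) :
    MvPolynomial.coeff β p = 0 := by
  letI := ord.lo
  by_contra hc
  have hβ : β ∈ p.support := MvPolynomial.mem_support_iff.mpr hc
  have hne : p.support.Nonempty := ⟨β, hβ⟩
  have hlp : ord.lp p = p.support.max' hne := by
    rw [TermOrder.lp, ← Finset.coe_max' hne]; rfl
  have hle : ord.lo.le β (p.support.max' hne) := Finset.le_max' p.support β hβ
  rw [hlp] at h
  exact ((ord.lo.lt_iff_le_not_ge _ β).mp h).2 hle

theorem sistep_lex (ord : TermOrder n) (A : Subalgebra R (MvPolynomial (Fin n) R))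
    (G : Set (MvPolynomial (Fin n) R)) {g h : MvPolynomial (Fin n) R}
    (hs : SiStep ord A G g h) :
    Finsupp.Lex (Function.swap ord.lo.lt) (· < ·) (siInd h) (siInd g) := by
  classical
  obtain ⟨α, M, gg, a, hc, hG, hA, hlp, hmon, hsub⟩ := hs
  have hhi : ∀ β, ord.lo.lt α β → MvPolynomial.coeff β h = MvPolynomial.coeff β g := by
    intro β hβ
    have hz : ∀ i, MvPolynomial.coeff β (a i * gg i) = 0 := fun i => by
      refine coeff_eq_zero_of_lp_lt_s8 ord (hlp i).1 ?_
      rw [(hlp i).2]; exact hβ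
    rw [hsub]
    simp [MvPolynomial.coeff_sub, MvPolynomial.coeff_sum, hz]
  have hsum : ∑ i, MvPolynomial.coeff α (a i * gg i) = MvPolynomial.coeff α g := by
    have hlt : ∀ i, MvPolynomial.coeff α (ord.ltm (a i * gg i))
        = MvPolynomial.coeff α (a i * gg i) := fun i => by
      rw [TermOrder.ltm, TermOrder.lc, (hlp i).2, MvPolynomial.coeff_monomial]
      simp
    have := congrArg (MvPolynomial.coeff α) hmon
    rw [MvPolynomial.coeff_monomial, MvPolynomial.coeff_sum] at this
    simp only [if_pos rfl, hlt] at this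
    exact this.symm
  have hhα : MvPolynomial.coeff α h = 0 := by
    rw [hsub, MvPolynomial.coeff_sub, MvPolynomial.coeff_sum, hsum, sub_self]
  refine Finsupp.lex_def.mpr ⟨α, ?_, ?_⟩
  · intro d hd
    rw [siInd_apply, siInd_apply, hhi d hd]
  · rw [siInd_apply, siInd_apply, if_pos hhα, if_neg hc]
    exact Nat.zero_lt_one

theorem siLex_wf (ord : TermOrder n) :
    WellFounded (Finsupp.Lex (Function.swap ord.lo.lt) ((· < ·) : ℕ → ℕ → Prop)) := by
  refine Finsupp.Lex.wellFounded (fun m hm => Nat.not_lt_zero m hm) Nat.lt_wfRel.wf ?_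
  refine Subrelation.wf (r := ord.lo.lt) ?_ ord.wf
  rintro x y ⟨h1, h2⟩
  rcases ord.lo.le_total x y with hxy | hyx
  · exact (ord.lo.lt_iff_le_not_ge x y).mpr
      ⟨hxy, fun hba => h2 (ord.lo.le_antisymm x y hxy hba)⟩
  · exact absurd ((ord.lo.lt_iff_le_not_ge y x).mpr
      ⟨hyx, fun hab => h2 (ord.lo.le_antisymm x y hab hyx)⟩) h1

end Aux

/-- every chain of one-step si-reductions via `G` (within `A`)
terminates, and consequently every `h ∈ A` has a final si-reductum via `G`. -/
theorem sireduce_terminates {n : ℕ} {R : Type*} [CommRing R] [IsDomain R]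
    [IsNoetherianRing R] (ord : TermOrder n)
    (A : Subalgebra R (MvPolynomial (Fin n) R)) (G : Set (MvPolynomial (Fin n) R))
    (hGA : G ⊆ (A : Set (MvPolynomial (Fin n) R))) :
    (¬ ∃ seq : ℕ → MvPolynomial (Fin n) R, (∀ j, seq j ∈ A) ∧
      ∀ j, SiStep ord A G (seq j) (seq (j + 1))) ∧
    (∀ h ∈ A, ∃ h' : MvPolynomial (Fin n) R, SiReduce ord A G h h' ∧
      ∀ h'' : MvPolynomial (Fin n) R, ¬ SiStep ord A G h' h'') := by
  have wf : WellFounded (fun x y : MvPolynomial (Fin n) R => SiStep ord A G y x) := by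
    refine Subrelation.wf
      (r := InvImage (Finsupp.Lex (Function.swap ord.lo.lt) (· < ·)) siInd) ?_
      (InvImage.wf _ (siLex_wf ord))
    intro x y hxy
    exact sistep_lex ord A G hxy
  constructor
  · rintro ⟨seq, hmem, hstep⟩
    have key : ∀ p : MvPolynomial (Fin n) R, ∀ j, seq j ≠ p := fun p => by
      refine wf.induction (C := fun q => ∀ j, seq j ≠ q) p ?_
      intro x ih j hj
      exact absurd rfl (ih (seq (j + 1)) (hj ▸ hstep j) (j + 1))
    exact key (seq 0) 0 rfl
  · intro h _
    refine wf.induction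
      (C := fun x => ∃ h', SiReduce ord A G x h' ∧
        ∀ h'' : MvPolynomial (Fin n) R, ¬ SiStep ord A G h' h'') h ?_
    intro x ih
    by_cases hx : ∃ y, SiStep ord A G x y
    · obtain ⟨y, hy⟩ := hx
      obtain ⟨h', hred, hfin⟩ := ih y hy
      exact ⟨h', Relation.ReflTransGen.head hy hred, hfin⟩
    · exact ⟨x, Relation.ReflTransGen.refl, fun h'' hh => hx ⟨h'', hh⟩⟩
end
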